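/- Let A be an invertible linear map on ℝ^d and x ∈ ℝ^d a unit vector. Then for every k ≤ d − 1, the norm of the k-th exterior power of the differential of the spherization ˢA at x (restricted to the tangent space of the sphere) satisfies ‖Λ^k d(ˢA)_x‖ ≤ ‖Λ^k A‖ / ‖Ax‖^k. -/

import Mathlib

open scoped RealInnerProductSpace

/-- The operator norm of `Λ^k A` (Euclidean structure), as the supremum over orthonormal
`k`-tuples of the norms of the decomposable images. -/
noncomputable def lambdaNorm {d : ℕ}
    (A : EuclideanSpace ℝ (Fin d) →L[ℝ] EuclideanSpace ℝ (Fin d)) (k : ℕ) : ℝ :=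
  sSup {t : ℝ | ∃ v : Fin k → EuclideanSpace ℝ (Fin d), Orthonormal ℝ v ∧
    t = Real.sqrt ((Matrix.of (fun i j : Fin k => ⟪A (v i), A (v j)⟫)).det)}

/-- The differential of the spherization `ˢA(x) = Ax/‖Ax‖`:
`w ↦ P^⊥(Aw/‖Ax‖)`, `P^⊥` being the orthogonal projection along `Ax/‖Ax‖`. -/
noncomputable def sphDiff {d : ℕ}
    (A : EuclideanSpace ℝ (Fin d) ≃L[ℝ] EuclideanSpace ℝ (Fin d))
    (x w : EuclideanSpace ℝ (Fin d)) : EuclideanSpace ℝ (Fin d) :=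
  (‖A x‖⁻¹ • A w) -
    ⟪(‖A x‖⁻¹ • A x : EuclideanSpace ℝ (Fin d)),
      (‖A x‖⁻¹ • A w : EuclideanSpace ℝ (Fin d))⟫ • (‖A x‖⁻¹ • A x)

open Matrix

/-- Gram matrices are positive semidefinite. -/
lemma gram_posSemidef {k d : ℕ} (w : Fin k → EuclideanSpace ℝ (Fin d)) :
    (Matrix.of fun i j => ⟪w i, w j⟫ : Matrix (Fin k) (Fin k) ℝ).PosSemidef := by
  rw [Matrix.posSemidef_iff_dotProduct_mulVec]
  constructor
  · ext i j
    simp only [Matrix.conjTranspose_apply, Matrix.of_apply, star_trivial]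
    exact real_inner_comm _ _
  · intro c
    have h : star c ⬝ᵥ ((Matrix.of fun i j => ⟪w i, w j⟫ : Matrix (Fin k) (Fin k) ℝ) *ᵥ c)
        = ⟪∑ i, c i • w i, ∑ j, c j • w j⟫ := by
      simp only [dotProduct, Matrix.mulVec, Matrix.of_apply, Pi.star_apply, star_trivial,
        sum_inner, inner_sum, real_inner_smul_left, real_inner_smul_right, Finset.mul_sum]
      apply Finset.sum_congr rfl
      intro i _
      apply Finset.sum_congr rfl
      intro j _
      rw [real_inner_comm (w j) (w i)]
      ring
    rw [h]
    exact real_inner_self_nonneg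

lemma psd_det_nonneg {k : ℕ} {M : Matrix (Fin k) (Fin k) ℝ} (h : M.PosSemidef) :
    0 ≤ M.det := by
  rw [h.isHermitian.det_eq_prod_eigenvalues]
  exact Finset.prod_nonneg fun i _ => by simpa using h.eigenvalues_nonneg i

lemma det_le_det_add_rankOne {k : ℕ} {M : Matrix (Fin k) (Fin k) ℝ} (hM : M.PosSemidef)
    (c : Fin k → ℝ) :
    M.det ≤ (M + Matrix.of fun i j => c i * c j).det := by
  have hR : (Matrix.of fun i j : Fin k => c i * c j : Matrix (Fin k) (Fin k) ℝ)
      = Matrix.replicateCol Unit c * Matrix.replicateRow Unit c := by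
    ext i j
    simp [Matrix.mul_apply]
  by_cases hdet : M.det = 0
  · rw [hdet]
    apply psd_det_nonneg
    apply hM.add
    rw [hR]
    rw [Matrix.posSemidef_iff_dotProduct_mulVec]
    constructor
    · ext i j
      simp only [Matrix.conjTranspose_apply, Matrix.mul_apply, Matrix.replicateCol_apply,
        Matrix.replicateRow_apply, star_trivial]
      apply Finset.sum_congr rfl
      intro _ _
      ring
    · intro y
      have h : star y ⬝ᵥ ((Matrix.replicateCol Unit c * Matrix.replicateRow Unit c) *ᵥ y)
          = (c ⬝ᵥ y) * (c ⬝ᵥ y) := by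
        simp only [dotProduct, Matrix.mulVec, Matrix.mul_apply, Matrix.replicateCol_apply,
          Matrix.replicateRow_apply, Pi.star_apply, star_trivial, Finset.mul_sum, Finset.sum_mul]
        apply Finset.sum_congr rfl
        intro i _
        apply Finset.sum_congr rfl
        intro j _
        simp [Finset.sum_mul, Finset.mul_sum]
        ring
      rw [h]
      exact mul_self_nonneg _
  · rw [hR, Matrix.det_add_replicateCol_mul_replicateRow (isUnit_iff_ne_zero.mpr hdet)]
    have h1 : (1 + Matrix.replicateRow Unit c * M⁻¹ * Matrix.replicateCol Unit c).det
        = 1 + c ⬝ᵥ (M⁻¹ *ᵥ c) := by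
      rw [Matrix.det_unique]
      simp only [Matrix.add_apply, Matrix.one_apply_eq, Matrix.mul_apply, Matrix.replicateRow_apply,
        Matrix.replicateCol_apply, dotProduct, Matrix.mulVec, Finset.sum_mul, Finset.mul_sum]
      rw [Finset.sum_comm]
      congr 1
      apply Finset.sum_congr rfl
      intro i _
      apply Finset.sum_congr rfl
      intro j _
      ring
    rw [h1]
    have hs : 0 ≤ c ⬝ᵥ (M⁻¹ *ᵥ c) := by simpa using hM.inv.dotProduct_mulVec_nonneg c
    nlinarith [psd_det_nonneg hM]

/-- For invertible `A` and a unit vector `x`, the `k`-th exterior power of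
the differential of the spherization `ˢA` at `x`, restricted to the tangent space of the sphere,
has norm at most `‖Λ^k A‖ / ‖Ax‖^k` for every `k ≤ d − 1`. -/
theorem sphDiff_lambdaNorm_le (d : ℕ)
    (A : EuclideanSpace ℝ (Fin d) ≃L[ℝ] EuclideanSpace ℝ (Fin d))
    (x : EuclideanSpace ℝ (Fin d)) (hx : ‖x‖ = 1) (k : ℕ) (hk : k ≤ d - 1) :
    sSup {t : ℝ | ∃ v : Fin k → EuclideanSpace ℝ (Fin d), Orthonormal ℝ v ∧
        (∀ i, ⟪v i, x⟫ = 0) ∧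
        t = Real.sqrt ((Matrix.of
          (fun i j : Fin k => ⟪sphDiff A x (v i), sphDiff A x (v j)⟫)).det)}
      ≤ lambdaNorm (A : EuclideanSpace ℝ (Fin d) →L[ℝ] EuclideanSpace ℝ (Fin d)) k
          / ‖A x‖ ^ k := by
  classical
  set Aop := (A : EuclideanSpace ℝ (Fin d) →L[ℝ] EuclideanSpace ℝ (Fin d)) with hAop
  have hxne : x ≠ 0 := fun h => by simp [h] at hx
  have hAxne : A x ≠ 0 := fun h => hxne (by simpa using congrArg A.symm h)
  have hAx : (0:ℝ) < ‖A x‖ := norm_pos_iff.mpr hAxne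
  set r : ℝ := ‖A x‖⁻¹ with hr
  have hrpos : 0 < r := inv_pos.mpr hAx
  set S := {t : ℝ | ∃ v : Fin k → EuclideanSpace ℝ (Fin d), Orthonormal ℝ v ∧
    t = Real.sqrt ((Matrix.of (fun i j : Fin k => ⟪Aop (v i), Aop (v j)⟫)).det)} with hS
  have hls : lambdaNorm Aop k = sSup S := rfl
  have hSnn : ∀ t ∈ S, 0 ≤ t := by
    rintro t ⟨v, hv, rfl⟩
    exact Real.sqrt_nonneg _
  have hSbdd : BddAbove S := by
    refine ⟨Real.sqrt ((Nat.factorial k) * (‖Aop‖ * ‖Aop‖) ^ k), ?_⟩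
    rintro t ⟨v, hv, rfl⟩
    apply Real.sqrt_le_sqrt
    have hbound : ∀ i j : Fin k,
        |(Matrix.of (fun i j : Fin k => ⟪Aop (v i), Aop (v j)⟫) : Matrix (Fin k) (Fin k) ℝ) i j|
          ≤ ‖Aop‖ * ‖Aop‖ := by
      intro i j
      have h1 : |⟪Aop (v i), Aop (v j)⟫| ≤ ‖Aop (v i)‖ * ‖Aop (v j)‖ :=
        abs_real_inner_le_norm _ _
      have h2 : ‖Aop (v i)‖ ≤ ‖Aop‖ := by
        have := Aop.le_opNorm (v i)
        rwa [hv.1 i, mul_one] at this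
      have h3 : ‖Aop (v j)‖ ≤ ‖Aop‖ := by
        have := Aop.le_opNorm (v j)
        rwa [hv.1 j, mul_one] at this
      calc |(Matrix.of (fun i j : Fin k => ⟪Aop (v i), Aop (v j)⟫)
              : Matrix (Fin k) (Fin k) ℝ) i j|
          = |⟪Aop (v i), Aop (v j)⟫| := rfl
        _ ≤ ‖Aop (v i)‖ * ‖Aop (v j)‖ := h1
        _ ≤ ‖Aop‖ * ‖Aop‖ := mul_le_mul h2 h3 (norm_nonneg _) (norm_nonneg _)
    have hdl := Matrix.det_le (A := (Matrix.of (fun i j : Fin k => ⟪Aop (v i), Aop (v j)⟫)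
        : Matrix (Fin k) (Fin k) ℝ)) (abv := AbsoluteValue.abs) (x := ‖Aop‖ * ‖Aop‖) hbound
    simp only [Fintype.card_fin, nsmul_eq_mul, AbsoluteValue.abs_apply] at hdl
    calc (Matrix.of (fun i j : Fin k => ⟪Aop (v i), Aop (v j)⟫)
          : Matrix (Fin k) (Fin k) ℝ).det
        ≤ |(Matrix.of (fun i j : Fin k => ⟪Aop (v i), Aop (v j)⟫)
          : Matrix (Fin k) (Fin k) ℝ).det| := le_abs_self _
      _ ≤ (Nat.factorial k) * (‖Aop‖ * ‖Aop‖) ^ k := hdl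
  have hlnn : 0 ≤ lambdaNorm Aop k := by
    rw [hls]
    exact Real.sSup_nonneg hSnn
  apply Real.sSup_le
  · rintro t ⟨v, hv, hvx, rfl⟩
    set u : EuclideanSpace ℝ (Fin d) := ‖A x‖⁻¹ • A x with hu
    have huu : ⟪u, u⟫ = 1 := by
      rw [hu, real_inner_smul_left, real_inner_smul_right, real_inner_self_eq_norm_mul_norm]
      field_simp
    set c : Fin k → ℝ := fun i => ⟪u, A (v i)⟫ with hc
    have hci : ∀ i : Fin k, (⟪A (v i), u⟫ : ℝ) = c i := by
      intro i
      rw [real_inner_comm]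
    have hsph : ∀ i : Fin k, sphDiff A x (v i) = r • A (v i) - (r * c i) • u := by
      intro i
      rw [sphDiff, real_inner_smul_right]
    have hentry : ∀ i j : Fin k, ⟪sphDiff A x (v i), sphDiff A x (v j)⟫
        = r ^ 2 * (⟪A (v i), A (v j)⟫ - c i * c j) := by
      intro i j
      rw [hsph i, hsph j]
      simp only [inner_sub_left, inner_sub_right, real_inner_smul_left, real_inner_smul_right,
        huu, hci]
      ring
    set N : Matrix (Fin k) (Fin k) ℝ :=
      Matrix.of (fun i j : Fin k => ⟪A (v i), A (v j)⟫ - c i * c j) with hN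
    have hNpsd : N.PosSemidef := by
      have hNe : N = Matrix.of fun i j => ⟪A (v i) - c i • u, A (v j) - c j • u⟫ := by
        ext i j
        simp only [hN, Matrix.of_apply, inner_sub_left, inner_sub_right, real_inner_smul_left,
          real_inner_smul_right, huu, hci]
        ring
      rw [hNe]
      exact gram_posSemidef _
    have hGA : N + (Matrix.of fun i j : Fin k => c i * c j)
        = Matrix.of (fun i j : Fin k => ⟪Aop (v i), Aop (v j)⟫) := by
      ext i j
      simp [hN]
      rfl
    have hdetle : N.det
        ≤ (Matrix.of (fun i j : Fin k => ⟪Aop (v i), Aop (v j)⟫)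
            : Matrix (Fin k) (Fin k) ℝ).det := by
      have h := det_le_det_add_rankOne hNpsd c
      rwa [hGA] at h
    have hmat : (Matrix.of (fun i j : Fin k => ⟪sphDiff A x (v i), sphDiff A x (v j)⟫)
        : Matrix (Fin k) (Fin k) ℝ) = (r ^ 2) • N := by
      ext i j
      simp only [Matrix.of_apply, Matrix.smul_apply, smul_eq_mul]
      rw [hentry i j]
      rfl
    have hdet' : (Matrix.of (fun i j : Fin k => ⟪sphDiff A x (v i), sphDiff A x (v j)⟫)
        : Matrix (Fin k) (Fin k) ℝ).det = (r ^ k) ^ 2 * N.det := by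
      rw [hmat, Matrix.det_smul]
      simp only [Fintype.card_fin, smul_eq_mul]
      ring
    rw [hdet', Real.sqrt_mul (sq_nonneg _), Real.sqrt_sq (pow_nonneg hrpos.le k)]
    have hNnn := psd_det_nonneg hNpsd
    calc r ^ k * Real.sqrt N.det
        ≤ r ^ k * Real.sqrt ((Matrix.of (fun i j : Fin k => ⟪Aop (v i), Aop (v j)⟫)
            : Matrix (Fin k) (Fin k) ℝ).det) := by
          exact mul_le_mul_of_nonneg_left (Real.sqrt_le_sqrt hdetle) (pow_nonneg hrpos.le k)
      _ ≤ r ^ k * lambdaNorm Aop k := by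
          apply mul_le_mul_of_nonneg_left _ (pow_nonneg hrpos.le k)
          rw [hls]
          exact le_csSup hSbdd ⟨v, hv, rfl⟩
      _ = lambdaNorm Aop k / ‖A x‖ ^ k := by
          rw [hr, div_eq_mul_inv, inv_pow]
          ring
  · exact div_nonneg hlnn (pow_nonneg (norm_nonneg _) k)
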